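/- For the double integrator with obstacle barrier h(r,v) = ‖r - r₀‖² - D², suppose along a solution the second-order HOCBF inequality 2‖v‖² + 2⟨r - r₀, u⟩ + (γ₁+γ₂)·2⟨r - r₀, v⟩ + γ₁γ₂(‖r - r₀‖² - D²) ≥ 0 holds for all t with γ₁, γ₂ > 0, and initially ‖r(0) - r₀‖ ≥ D and 2⟨r(0) - r₀, v(0)⟩ + γ₁(‖r(0) - r₀‖² - D²) ≥ 0. Then ‖r(t) - r₀‖ ≥ D for all t ≥ 0. -/

import Mathlib

open scoped RealInnerProductSpace

lemma gronwall_nonneg (f f' : ℝ → ℝ) (γ : ℝ)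
    (hf : ∀ t, HasDerivAt f (f' t) t)
    (h : ∀ t, 0 ≤ t → 0 ≤ f' t + γ * f t) (h0 : 0 ≤ f 0) :
    ∀ t, 0 ≤ t → 0 ≤ f t := by
  intro t ht
  set g : ℝ → ℝ := fun x => Real.exp (γ * x) * f x with hg_def
  have hg : ∀ x, HasDerivAt g (Real.exp (γ * x) * γ * f x + Real.exp (γ * x) * f' x) x := by
    intro x
    have he : HasDerivAt (fun x => Real.exp (γ * x)) (Real.exp (γ * x) * γ) x := by
      simpa using ((hasDerivAt_id x).const_mul γ).exp
    exact he.mul (hf x)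
  have hmono : MonotoneOn g (Set.Ici (0:ℝ)) := by
    apply monotoneOn_of_deriv_nonneg (convex_Ici 0)
    · have hdf : Differentiable ℝ f := fun x => (hf x).differentiableAt
      exact ((Real.continuous_exp.comp (continuous_const.mul continuous_id)).mul
        hdf.continuous).continuousOn
    · intro x hx
      exact ((hg x).differentiableAt).differentiableWithinAt
    · intro x hx
      rw [(hg x).deriv]
      have hx' : (0:ℝ) ≤ x := le_of_lt (by simpa using hx)
      have := h x hx'
      have he : 0 ≤ Real.exp (γ * x) := (Real.exp_pos _).le
      nlinarith [Real.exp_pos (γ * x)]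
  have h1 : g 0 ≤ g t := hmono (by simp) (by simpa using ht) ht
  have h2 : g 0 = f 0 := by simp [hg_def]
  have h3 : 0 ≤ Real.exp (γ * t) * f t := by
    have : g t = Real.exp (γ * t) * f t := rfl
    linarith [h2 ▸ h1, this ▸ h1]
  nlinarith [Real.exp_pos (γ * t)]

/-- order-2 HOCBF safety for the double integrator with a
spherical forbidden region. -/
theorem stmt_5 (r v u : ℝ → EuclideanSpace ℝ (Fin 3))
    (r₀ : EuclideanSpace ℝ (Fin 3)) (D γ₁ γ₂ : ℝ)
    (hD : 0 < D) (hγ₁ : 0 < γ₁) (hγ₂ : 0 < γ₂)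
    (hu : Continuous u)
    (hr : ∀ t, HasDerivAt r (v t) t) (hv : ∀ t, HasDerivAt v (u t) t)
    (hineq : ∀ t : ℝ, 0 ≤ t →
      2 * ‖v t‖ ^ 2 + 2 * ⟪r t - r₀, u t⟫
        + (γ₁ + γ₂) * (2 * ⟪r t - r₀, v t⟫)
        + γ₁ * γ₂ * (‖r t - r₀‖ ^ 2 - D ^ 2) ≥ 0)
    (h0 : D ≤ ‖r 0 - r₀‖)
    (hψ0 : 2 * ⟪r 0 - r₀, v 0⟫ + γ₁ * (‖r 0 - r₀‖ ^ 2 - D ^ 2) ≥ 0) :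
    ∀ t : ℝ, 0 ≤ t → D ≤ ‖r t - r₀‖ := by
  set w : ℝ → EuclideanSpace ℝ (Fin 3) := fun t => r t - r₀ with hw_def
  have hw : ∀ t, HasDerivAt w (v t) t := fun t => (hr t).sub_const r₀
  have hnorm : ∀ t, ⟪w t, w t⟫ = ‖w t‖ ^ 2 := fun t => real_inner_self_eq_norm_sq (w t)
  set f : ℝ → ℝ := fun t => ⟪w t, w t⟫ - D ^ 2 with hf_def
  have hf : ∀ t, HasDerivAt f (2 * ⟪w t, v t⟫) t := by
    intro t
    have h := ((hw t).inner ℝ (hw t)).sub_const (D ^ 2)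
    refine h.congr_deriv ?_
    rw [real_inner_comm (v t) (w t)]; ring
  set ψ : ℝ → ℝ := fun t => 2 * ⟪w t, v t⟫ + γ₁ * f t with hψ_def
  have hψ : ∀ t, HasDerivAt ψ (2 * (⟪w t, u t⟫ + ⟪v t, v t⟫) + γ₁ * (2 * ⟪w t, v t⟫)) t := by
    intro t
    have h1 := ((hw t).inner ℝ (hv t)).const_mul (2:ℝ)
    have h2 := (hf t).const_mul γ₁
    exact h1.add h2
  have hψnn : ∀ t, 0 ≤ t → 0 ≤ ψ t := by
    apply gronwall_nonneg ψ _ γ₂ hψ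
    · intro t ht
      have h1 : 2 * ‖v t‖ ^ 2 + 2 * ⟪w t, u t⟫ + (γ₁ + γ₂) * (2 * ⟪w t, v t⟫)
          + γ₁ * γ₂ * (‖w t‖ ^ 2 - D ^ 2) ≥ 0 := hineq t ht
      have h2 : ⟪v t, v t⟫ = ‖v t‖ ^ 2 := real_inner_self_eq_norm_sq (v t)
      have h3 := hnorm t
      rw [← h2, ← h3] at h1
      simp only [hψ_def, hf_def]
      ring_nf
      ring_nf at h1
      linarith
    · have hψ0' : 2 * ⟪w 0, v 0⟫ + γ₁ * (‖w 0‖ ^ 2 - D ^ 2) ≥ 0 := hψ0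
      simp only [hψ_def, hf_def, hnorm 0]
      linarith
  have hfnn : ∀ t, 0 ≤ t → 0 ≤ f t := by
    apply gronwall_nonneg f _ γ₁ hf
    · intro t ht
      have := hψnn t ht
      simp only [hψ_def] at this
      linarith
    · have h0' : D ≤ ‖w 0‖ := h0
      simp only [hf_def, hnorm 0]
      nlinarith [norm_nonneg (w 0)]
  intro t ht
  have := hfnn t ht
  simp only [hf_def, hnorm t] at this
  nlinarith [norm_nonneg (w t)]
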